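/- arXiv:2002.08341 — 10 statements merged into one kernel-verified Lean document; each statement's English description precedes it below -/
import Mathlib

section
/- Let Σ₁, Σ₂ be D×D symmetric positive definite matrices, β₁, β₂ ∈ ℝ^D, σ₁², σ₂² > 0, and for i = 1,2 let Σᵢ^f = [[Σᵢ, Σᵢβᵢ],[βᵢᵀΣᵢ, σᵢ² + βᵢᵀΣᵢβᵢ]]. Then the trace of (Σ₂^f)⁻¹ Σ₁^f equals Tr(Σ₂⁻¹Σ₁) + σ₁²/σ₂² + (β₁ − β₂)ᵀΣ₁(β₁ − β₂)/σ₂². -/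
open Matrix

/-- Joint covariance matrix `[[S, Sb],[bᵀS, s2 + bᵀSb]]`. -/
noncomputable def jointCov {D : ℕ} (S : Matrix (Fin D) (Fin D) ℝ) (b : Fin D → ℝ) (s2 : ℝ) :
    Matrix (Fin D ⊕ Unit) (Fin D ⊕ Unit) ℝ :=
  Matrix.fromBlocks S (Matrix.of fun i _ => S.mulVec b i)
    (Matrix.of fun _ j => S.vecMul b j) (Matrix.of fun _ _ => s2 + b ⬝ᵥ S.mulVec b)

noncomputable def jInv {D : ℕ} (S : Matrix (Fin D) (Fin D) ℝ) (b : Fin D → ℝ) (s2 : ℝ) :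
    Matrix (Fin D ⊕ Unit) (Fin D ⊕ Unit) ℝ :=
  Matrix.fromBlocks (S⁻¹ + s2⁻¹ • vecMulVec b b)
    (Matrix.of fun i _ => -(s2⁻¹ * b i)) (Matrix.of fun _ j => -(s2⁻¹ * b j))
    (Matrix.of fun _ _ => s2⁻¹)

lemma jointCov_mul_jInv {D : ℕ} (S : Matrix (Fin D) (Fin D) ℝ) (b : Fin D → ℝ) (s2 : ℝ)
    (hS : S.PosDef) (hs : s2 ≠ 0) :
    jointCov S b s2 * jInv S b s2 = 1 := by
  have hdet : IsUnit S.det := isUnit_iff_ne_zero.2 (ne_of_gt hS.det_pos)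
  have hSi : S * S⁻¹ = 1 := Matrix.mul_nonsing_inv S hdet
  rw [jointCov, jInv, fromBlocks_multiply]
  rw [show (1 : Matrix (Fin D ⊕ Unit) (Fin D ⊕ Unit) ℝ) = fromBlocks 1 0 0 1 from
    (fromBlocks_one).symm]
  have h11 : S * (S⁻¹ + s2⁻¹ • vecMulVec b b) +
      (Matrix.of fun i (_ : Unit) => S.mulVec b i) * (Matrix.of fun _ j => -(s2⁻¹ * b j)) = 1 := by
    ext i j
    have := Matrix.ext_iff.2 hSi i j
    simp only [mul_apply] at this
    simp only [mul_apply, Matrix.add_apply, Matrix.of_apply, Matrix.smul_apply, vecMulVec_apply,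
      mulVec, dotProduct, smul_eq_mul]
    have key : ∀ x, S i x * (S⁻¹ x j + s2⁻¹ * (b x * b j)) =
        S i x * S⁻¹ x j + (S i x * b x) * (s2⁻¹ * b j) := fun x => by ring
    simp only [key, Finset.sum_add_distrib, ← Finset.sum_mul, Finset.univ_unique,
      Finset.sum_singleton, this]
    erw [mul_apply, Fintype.sum_unique (ι := Unit)]
    simp only [Matrix.of_apply]
    ring
  have h12 : S * (Matrix.of fun i (_ : Unit) => -(s2⁻¹ * b i)) +
      (Matrix.of fun i (_ : Unit) => S.mulVec b i) * (Matrix.of fun (_ _ : Unit) => s2⁻¹) = 0 := by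
    ext i j
    simp only [mul_apply, Matrix.add_apply, Matrix.of_apply, mulVec, dotProduct,
      Finset.univ_unique, Finset.sum_singleton, Matrix.zero_apply]
    have key : ∀ x, S i x * -(s2⁻¹ * b x) = (S i x * b x) * (-s2⁻¹) := fun x => by ring
    simp only [key, ← Finset.sum_mul]
    ring
  have hb : (b ᵥ* S) ᵥ* S⁻¹ = b := by rw [vecMul_vecMul, hSi, vecMul_one]
  have hq : b ⬝ᵥ S *ᵥ b = (b ᵥ* S) ⬝ᵥ b := dotProduct_mulVec b S b
  have hss : s2 * s2⁻¹ = 1 := mul_inv_cancel₀ hs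
  have h21 : (Matrix.of fun (_ : Unit) j => S.vecMul b j) * (S⁻¹ + s2⁻¹ • vecMulVec b b) +
      (Matrix.of fun (_ _ : Unit) => s2 + b ⬝ᵥ S.mulVec b) *
        (Matrix.of fun (_ : Unit) j => -(s2⁻¹ * b j)) = 0 := by
    ext i j
    simp only [mul_apply, Matrix.add_apply, Matrix.of_apply, Matrix.smul_apply, vecMulVec_apply,
      smul_eq_mul, Finset.univ_unique, Finset.sum_singleton, Matrix.zero_apply]
    have key : ∀ x, (b ᵥ* S) x * (S⁻¹ x j + s2⁻¹ * (b x * b j)) =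
        (b ᵥ* S) x * S⁻¹ x j + ((b ᵥ* S) x * b x) * (s2⁻¹ * b j) := fun x => by ring
    simp only [key, Finset.sum_add_distrib, ← Finset.sum_mul]
    rw [show (∑ x, (b ᵥ* S) x * S⁻¹ x j) = (b ᵥ* S ᵥ* S⁻¹) j from rfl, hb,
      show (∑ x, (b ᵥ* S) x * b x) = (b ᵥ* S) ⬝ᵥ b from rfl, ← dotProduct_mulVec]
    set q := b ⬝ᵥ S *ᵥ b with hqdef
    rw [show (s2 + q) * -(s2⁻¹ * b j) = -(s2 * s2⁻¹ * b j) - q * (s2⁻¹ * b j) from by ring, hss]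
    ring
  have h22 : (Matrix.of fun (_ : Unit) j => S.vecMul b j) * (Matrix.of fun i (_ : Unit) => -(s2⁻¹ * b i)) +
      (Matrix.of fun (_ _ : Unit) => s2 + b ⬝ᵥ S.mulVec b) *
        (Matrix.of fun (_ _ : Unit) => s2⁻¹) = 1 := by
    ext i j
    simp only [mul_apply, Matrix.add_apply, Matrix.of_apply, Finset.univ_unique,
      Finset.sum_singleton, Matrix.one_apply_eq]
    have key : ∀ x, (b ᵥ* S) x * -(s2⁻¹ * b x) = ((b ᵥ* S) x * b x) * (-s2⁻¹) := fun x => by ring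
    simp only [key, ← Finset.sum_mul]
    rw [show (∑ x, (b ᵥ* S) x * b x) = (b ᵥ* S) ⬝ᵥ b from rfl, ← dotProduct_mulVec]
    set q := b ⬝ᵥ S *ᵥ b with hqdef
    rw [show (s2 + q) * s2⁻¹ = s2 * s2⁻¹ + q * s2⁻¹ from by ring, hss]
    ring
  exact fromBlocks_inj.mpr ⟨h11, h12, h21, h22⟩

lemma trace_fromBlocks' {D : ℕ} (A : Matrix (Fin D) (Fin D) ℝ) (B : Matrix (Fin D) Unit ℝ)
    (C : Matrix Unit (Fin D) ℝ) (E : Matrix Unit Unit ℝ) :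
    (fromBlocks A B C E).trace = A.trace + E.trace := by
  simp [Matrix.trace, Fintype.sum_sum_type, fromBlocks]

lemma trace_vecMulVec_mul {D : ℕ} (u v : Fin D → ℝ) (M : Matrix (Fin D) (Fin D) ℝ) :
    (vecMulVec u v * M).trace = v ⬝ᵥ M.mulVec u := by
  simp [Matrix.trace, mul_apply, vecMulVec_apply, dotProduct, mulVec, Finset.mul_sum,
    Finset.sum_mul]
  rw [Finset.sum_comm]
  congr 1; ext i; congr 1; ext j; ring

theorem trace_inv_jointCov_mul {D : ℕ}
    (S1 S2 : Matrix (Fin D) (Fin D) ℝ) (b1 b2 : Fin D → ℝ) (s1 s2 : ℝ)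
    (hS1 : S1.PosDef) (hS2 : S2.PosDef) (hs1 : 0 < s1) (hs2 : 0 < s2) :
    ((jointCov S2 b2 s2)⁻¹ * jointCov S1 b1 s1).trace =
      (S2⁻¹ * S1).trace + s1 / s2 + (b1 - b2) ⬝ᵥ S1.mulVec (b1 - b2) / s2 := by
  have hinv : (jointCov S2 b2 s2)⁻¹ = jInv S2 b2 s2 :=
    Matrix.inv_eq_right_inv (jointCov_mul_jInv S2 b2 s2 hS2 (ne_of_gt hs2))
  rw [hinv, jInv, jointCov, fromBlocks_multiply, trace_fromBlocks']
  have t1 : ((S2⁻¹ + s2⁻¹ • vecMulVec b2 b2) * S1).trace =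
      (S2⁻¹ * S1).trace + s2⁻¹ * (b2 ⬝ᵥ S1 *ᵥ b2) := by
    rw [add_mul, trace_add, smul_mul, trace_smul, trace_vecMulVec_mul, smul_eq_mul]
  have t2 : ((Matrix.of fun i (_ : Unit) => -(s2⁻¹ * b2 i)) *
      (Matrix.of fun (_ : Unit) j => S1.vecMul b1 j)).trace = -(s2⁻¹ * (b1 ⬝ᵥ S1 *ᵥ b2)) := by
    simp only [Matrix.trace, diag, mul_apply, Matrix.of_apply, Finset.univ_unique,
      Finset.sum_singleton]
    have key : ∀ i, -(s2⁻¹ * b2 i) * (b1 ᵥ* S1) i = -(s2⁻¹ * ((b1 ᵥ* S1) i * b2 i)) :=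
      fun i => by ring
    rw [Finset.sum_congr rfl fun i _ => key i, Finset.sum_neg_distrib, ← Finset.mul_sum,
      show (∑ i, (b1 ᵥ* S1) i * b2 i) = (b1 ᵥ* S1) ⬝ᵥ b2 from rfl, ← dotProduct_mulVec]
  have t3 : ((Matrix.of fun (_ : Unit) j => -(s2⁻¹ * b2 j)) *
      (Matrix.of fun i (_ : Unit) => S1.mulVec b1 i) +
      (Matrix.of fun (_ _ : Unit) => s2⁻¹) *
      (Matrix.of fun (_ _ : Unit) => s1 + b1 ⬝ᵥ S1.mulVec b1)).trace =
      -(s2⁻¹ * (b2 ⬝ᵥ S1 *ᵥ b1)) + s2⁻¹ * (s1 + b1 ⬝ᵥ S1 *ᵥ b1) := by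
    simp only [Matrix.trace, diag, Matrix.add_apply, mul_apply, Matrix.of_apply,
      Finset.univ_unique, Finset.sum_singleton]
    have key : ∀ j, -(s2⁻¹ * b2 j) * (S1 *ᵥ b1) j = -(s2⁻¹ * (b2 j * (S1 *ᵥ b1) j)) :=
      fun j => by ring
    rw [Finset.sum_congr rfl fun j _ => key j, Finset.sum_neg_distrib, ← Finset.mul_sum,
      show (∑ j, b2 j * (S1 *ᵥ b1) j) = b2 ⬝ᵥ S1 *ᵥ b1 from rfl]
  rw [trace_add, t1, t2, t3, mulVec_sub, dotProduct_sub, sub_dotProduct, sub_dotProduct,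
    div_eq_mul_inv, div_eq_mul_inv]
  ring
end

section
/- Let π₁, π₂ be centered multivariate Gaussian distributions on ℝ^{D+1} with covariances Σᵢ^f = [[Σᵢ, Σᵢβᵢ],[βᵢᵀΣᵢ, σᵢ² + βᵢᵀΣᵢβᵢ]], where Σᵢ is positive definite and σᵢ² > 0, for i = 1,2. Then KL(π₁ ‖ π₂) = KL(N(0,Σ₁) ‖ N(0,Σ₂)) + KL(N(0,σ₁²) ‖ N(0,σ₂²)) + (1/2)(β₁ − β₂)ᵀΣ₁(β₁ − β₂)/σ₂². -/
open Matrix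

/-- KL divergence between centered multivariate Gaussians `N(0, A)` and `N(0, B)`
with positive definite covariances:
`KL(N(0,A) ‖ N(0,B)) = (1/2)(log det B − log det A − d + Tr(B⁻¹A))`. -/
noncomputable def klGauss {n : Type*} [Fintype n] [DecidableEq n]
    (A B : Matrix n n ℝ) : ℝ :=
  (1 / 2) * (Real.log B.det - Real.log A.det - (Fintype.card n : ℝ) + (B⁻¹ * A).trace)

noncomputable def lowM {D : ℕ} (b : Fin D → ℝ) : Matrix (Fin D ⊕ Unit) (Fin D ⊕ Unit) ℝ :=
  Matrix.fromBlocks 1 0 (Matrix.replicateRow Unit b) 1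

noncomputable def diagM {D : ℕ} (S : Matrix (Fin D) (Fin D) ℝ) (s : ℝ) :
    Matrix (Fin D ⊕ Unit) (Fin D ⊕ Unit) ℝ :=
  Matrix.fromBlocks S 0 0 (s • 1)

lemma lowM_mul {D : ℕ} (a b : Fin D → ℝ) : lowM a * lowM b = lowM (a + b) := by
  rw [lowM, lowM, lowM, Matrix.fromBlocks_multiply]
  simp [Matrix.replicateRow_add]

lemma lowM_zero {D : ℕ} : lowM (0 : Fin D → ℝ) = 1 := by
  rw [lowM, Matrix.replicateRow_zero, Matrix.fromBlocks_one]

lemma lowM_mul_neg {D : ℕ} (b : Fin D → ℝ) : lowM b * lowM (-b) = 1 := by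
  rw [lowM_mul, add_neg_cancel, lowM_zero]

lemma lowM_neg_mul {D : ℕ} (b : Fin D → ℝ) : lowM (-b) * lowM b = 1 := by
  rw [lowM_mul, neg_add_cancel, lowM_zero]

lemma diagM_inv_mul {D : ℕ} {S : Matrix (Fin D) (Fin D) ℝ} {s : ℝ}
    (hS : S.PosDef) (hs : s ≠ 0) : diagM S⁻¹ s⁻¹ * diagM S s = 1 := by
  rw [diagM, diagM, Matrix.fromBlocks_multiply]
  simp [Matrix.nonsing_inv_mul S (isUnit_iff_ne_zero.mpr hS.det_pos.ne'), smul_smul,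
    inv_mul_cancel₀ hs, mul_inv_cancel₀ hs,
    ← Matrix.fromBlocks_one]

lemma jointCov_eq {D : ℕ} (S : Matrix (Fin D) (Fin D) ℝ) (b : Fin D → ℝ) (s : ℝ) :
    jointCov S b s = lowM b * diagM S s * (lowM b)ᵀ := by
  rw [lowM, diagM, Matrix.fromBlocks_transpose, Matrix.fromBlocks_multiply,
    Matrix.fromBlocks_multiply]
  simp only [Matrix.mul_one, Matrix.one_mul, Matrix.mul_zero, Matrix.zero_mul,
    add_zero, zero_add, Matrix.transpose_one, Matrix.transpose_zero,
    Matrix.transpose_replicateRow]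
  have h4 : Matrix.replicateRow Unit b * S * Matrix.replicateCol Unit b
      = Matrix.of fun _ _ => b ⬝ᵥ S *ᵥ b := by
    rw [← Matrix.replicateRow_vecMul, Matrix.replicateRow_mul_replicateCol, ← Matrix.dotProduct_mulVec]
  rw [jointCov, h4, ← Matrix.replicateCol_mulVec, ← Matrix.replicateRow_vecMul]
  ext (i|i) (j|j) <;>
    simp [Matrix.fromBlocks, Matrix.add_apply, Matrix.smul_apply, Matrix.one_apply,
      Matrix.replicateCol, Matrix.replicateRow, add_comm]

lemma det_smul_one_unit (s : ℝ) : (s • (1 : Matrix Unit Unit ℝ)).det = s := by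
  rw [Matrix.det_unique]
  simp

lemma jointCov_det {D : ℕ} (S : Matrix (Fin D) (Fin D) ℝ) (b : Fin D → ℝ) (s : ℝ) :
    (jointCov S b s).det = S.det * s := by
  rw [jointCov_eq, Matrix.det_mul, Matrix.det_mul, Matrix.det_transpose, lowM, diagM,
    Matrix.det_fromBlocks_zero₁₂, Matrix.det_fromBlocks_zero₁₂, det_smul_one_unit]
  simp

lemma jointCov_inv {D : ℕ} {S : Matrix (Fin D) (Fin D) ℝ} (b : Fin D → ℝ) {s : ℝ}
    (hS : S.PosDef) (hs : s ≠ 0) :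
    (jointCov S b s)⁻¹ = (lowM (-b))ᵀ * diagM S⁻¹ s⁻¹ * lowM (-b) := by
  apply Matrix.inv_eq_left_inv
  rw [jointCov_eq]
  calc (lowM (-b))ᵀ * diagM S⁻¹ s⁻¹ * lowM (-b) * (lowM b * diagM S s * (lowM b)ᵀ)
      = (lowM (-b))ᵀ * ((diagM S⁻¹ s⁻¹ * ((lowM (-b) * lowM b) * diagM S s)) * (lowM b)ᵀ) := by
        simp only [Matrix.mul_assoc]
    _ = 1 := by
        rw [lowM_neg_mul, Matrix.one_mul, diagM_inv_mul hS hs, Matrix.one_mul,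
          ← Matrix.transpose_mul, lowM_mul_neg, Matrix.transpose_one]

lemma trace_fromBlocks'_s3 {n m : Type*} [Fintype n] [Fintype m]
    (A : Matrix n n ℝ) (B : Matrix n m ℝ) (C : Matrix m n ℝ) (Dm : Matrix m m ℝ) :
    (Matrix.fromBlocks A B C Dm).trace = A.trace + Dm.trace := by
  simp [Matrix.trace, Fintype.sum_sum_type, Matrix.diag, Matrix.fromBlocks]

lemma jointCov_trace {D : ℕ} {S1 S2 : Matrix (Fin D) (Fin D) ℝ} (b1 b2 : Fin D → ℝ)
    (s1 : ℝ) {s2 : ℝ} (hS2 : S2.PosDef) (hs2 : s2 ≠ 0) :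
    ((jointCov S2 b2 s2)⁻¹ * jointCov S1 b1 s1).trace =
      (S2⁻¹ * S1).trace + s2⁻¹ * ((b1 - b2) ⬝ᵥ S1 *ᵥ (b1 - b2)) + s2⁻¹ * s1 := by
  set d := b1 - b2 with hd
  rw [jointCov_inv b2 hS2 hs2, jointCov_eq]
  rw [show (lowM (-b2))ᵀ * diagM S2⁻¹ s2⁻¹ * lowM (-b2) * (lowM b1 * diagM S1 s1 * (lowM b1)ᵀ)
      = (lowM (-b2))ᵀ * (diagM S2⁻¹ s2⁻¹ * ((lowM (-b2) * lowM b1) * (diagM S1 s1 * (lowM b1)ᵀ)))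
      from by simp only [Matrix.mul_assoc]]
  rw [Matrix.trace_mul_comm, lowM_mul, show -b2 + b1 = d from by rw [hd]; ring]
  rw [show diagM S2⁻¹ s2⁻¹ * (lowM d * (diagM S1 s1 * (lowM b1)ᵀ)) * (lowM (-b2))ᵀ
      = diagM S2⁻¹ s2⁻¹ * lowM d * diagM S1 s1 * ((lowM b1)ᵀ * (lowM (-b2))ᵀ) from by simp only [Matrix.mul_assoc]]
  rw [← Matrix.transpose_mul, lowM_mul, show -b2 + b1 = d from by rw [hd]; ring]
  rw [diagM, diagM, lowM, Matrix.fromBlocks_transpose, Matrix.fromBlocks_multiply,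
    Matrix.fromBlocks_multiply, Matrix.fromBlocks_multiply]
  simp only [Matrix.mul_one, Matrix.one_mul, Matrix.mul_zero, Matrix.zero_mul,
    add_zero, zero_add, Matrix.transpose_one, Matrix.transpose_zero, Matrix.transpose_replicateRow,
    Matrix.smul_mul, Matrix.mul_smul, smul_smul]
  rw [trace_fromBlocks'_s3]
  have h4 : Matrix.replicateRow Unit d * S1 * Matrix.replicateCol Unit d
      = Matrix.of fun _ _ => d ⬝ᵥ S1 *ᵥ d := by
    rw [← Matrix.replicateRow_vecMul, Matrix.replicateRow_mul_replicateCol, ← Matrix.dotProduct_mulVec]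
  rw [h4]
  simp [Matrix.trace_add, Matrix.trace_smul, Matrix.trace_one, Matrix.trace, Matrix.diag]
  ring

theorem klGauss_jointCov {D : ℕ}
    (S1 S2 : Matrix (Fin D) (Fin D) ℝ) (b1 b2 : Fin D → ℝ) (s1 s2 : ℝ)
    (hS1 : S1.PosDef) (hS2 : S2.PosDef) (hs1 : 0 < s1) (hs2 : 0 < s2) :
    klGauss (jointCov S1 b1 s1) (jointCov S2 b2 s2) =
      klGauss S1 S2
        + (1 / 2) * (Real.log s2 - Real.log s1 - 1 + s1 / s2)
        + (1 / 2) * ((b1 - b2) ⬝ᵥ S1.mulVec (b1 - b2)) / s2 := by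
  rw [klGauss, klGauss, jointCov_det, jointCov_det,
    jointCov_trace b1 b2 s1 hS2 hs2.ne',
    Real.log_mul hS1.det_pos.ne' hs1.ne', Real.log_mul hS2.det_pos.ne' hs2.ne']
  have hcard : (Fintype.card (Fin D ⊕ Unit) : ℝ) = (D : ℝ) + 1 := by simp
  rw [hcard]
  have : (Fintype.card (Fin D) : ℝ) = (D : ℝ) := by simp
  rw [this]
  field_simp
  ring
end

section
/- In the linear SEM with I − B_XX invertible and Cov(X) positive definite, the population least-squares regression coefficient β = Cov(X)⁻¹Cov(X, Y) satisfies β = β* + Cov(X)⁻¹η*, where η* = (I − B_XX)⁻¹ B_XH Σ_{ε_H} η₀. In particular, if B_XH Σ_{ε_H} η₀ = 0 then least squares is unbiased for β*. -/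
open Matrix MeasureTheory ProbabilityTheory

section Aux

variable {Ω : Type*} [MeasurableSpace Ω] {μ : Measure Ω} [IsProbabilityMeasure μ]

lemma aux_int_mul {f g : Ω → ℝ} (hf : MemLp f 2 μ) (hg : MemLp g 2 μ) :
    Integrable (fun ω => f ω * g ω) μ := by
  have h : MemLp (f • g) 1 μ := hg.smul hf
  rw [memLp_one_iff_integrable] at h
  simp only [smul_eq_mul] at h
  exact h

lemma aux_indep_zero {f g : Ω → ℝ} (hf : MemLp f 2 μ) (hg : MemLp g 2 μ)
    (hi : IndepFun f g μ) (h0 : ∫ ω, f ω ∂μ = 0) :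
    ∫ ω, f ω * g ω ∂μ = 0 := by
  have h : ∫ ω, f ω * g ω ∂μ = (∫ ω, f ω ∂μ) * ∫ ω, g ω ∂μ :=
    hi.integral_mul_eq_mul_integral (hf.integrable (by norm_num)).aestronglyMeasurable
      (hg.integrable (by norm_num)).aestronglyMeasurable
  rw [h, h0, zero_mul]

lemma aux_integral_dot {n : ℕ} (u : Fin n → ℝ) (f : Ω → Fin n → ℝ) (g : Ω → ℝ)
    (hint : ∀ k, Integrable (fun ω => f ω k * g ω) μ) :
    ∫ ω, (u ⬝ᵥ f ω) * g ω ∂μ = ∑ k, u k * ∫ ω, f ω k * g ω ∂μ := by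
  have : ∀ ω, (u ⬝ᵥ f ω) * g ω = ∑ k, u k * (f ω k * g ω) := by
    intro ω; simp [dotProduct, Finset.sum_mul, mul_assoc]
  simp_rw [this]
  rw [integral_finset_sum _ (fun k _ => (hint k).const_mul (u k))]
  simp_rw [integral_const_mul]

end Aux

/-- In the linear SEM, the population least-squares coefficient
`β = Cov(X)⁻¹ Cov(X, Y)` equals `β* + Cov(X)⁻¹ η*` where
`η* = (I − B_XX)⁻¹ B_XH Σ_H η₀`; in particular, if `B_XH Σ_H η₀ = 0`
then least squares is unbiased for `β*`. -/
theorem sem_least_squares {D Q : ℕ}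
    {Ω : Type*} [MeasurableSpace Ω] (μ : Measure Ω) [IsProbabilityMeasure μ]
    (BXX : Matrix (Fin D) (Fin D) ℝ) (BXH : Matrix (Fin D) (Fin Q) ℝ)
    (bstar : Fin D → ℝ) (eta0 : Fin Q → ℝ)
    (C : Matrix (Fin D) (Fin D) ℝ)
    (hC : C * (1 - BXX) = 1 ∧ (1 - BXX) * C = 1)
    (epsX : Ω → Fin D → ℝ) (epsY : Ω → ℝ) (epsH : Ω → Fin Q → ℝ)
    (hmX : ∀ i, MemLp (fun ω => epsX ω i) 2 μ)
    (hmY : MemLp epsY 2 μ)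
    (hmH : ∀ q, MemLp (fun ω => epsH ω q) 2 μ)
    (hcX : ∀ i, ∫ ω, epsX ω i ∂μ = 0)
    (hcY : ∫ ω, epsY ω ∂μ = 0)
    (hcH : ∀ q, ∫ ω, epsH ω q ∂μ = 0)
    (hXY : IndepFun epsX epsY μ)
    (hXH : IndepFun epsX epsH μ)
    (hYH : IndepFun epsY epsH μ)
    (SX : Matrix (Fin D) (Fin D) ℝ) (SH : Matrix (Fin Q) (Fin Q) ℝ)
    (hSX : ∀ i j, ∫ ω, epsX ω i * epsX ω j ∂μ = SX i j)
    (hSH : ∀ p q, ∫ ω, epsH ω p * epsH ω q ∂μ = SH p q)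
    (X : Ω → Fin D → ℝ) (Y : Ω → ℝ)
    (hX : ∀ ω, X ω = C.mulVec (epsX ω + BXH.mulVec (epsH ω)))
    (hY : ∀ ω, Y ω = bstar ⬝ᵥ X ω + eta0 ⬝ᵥ epsH ω + epsY ω)
    -- the covariance matrix of X and the cross-covariance with Y
    (CovX : Matrix (Fin D) (Fin D) ℝ)
    (hCovX : ∀ i j, CovX i j = ∫ ω, X ω i * X ω j ∂μ)
    (CovXY : Fin D → ℝ)
    (hCovXY : ∀ i, CovXY i = ∫ ω, X ω i * Y ω ∂μ)
    (hpd : CovX.PosDef) :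
    CovX⁻¹.mulVec CovXY = bstar + CovX⁻¹.mulVec ((C * BXH * SH).mulVec eta0) ∧
    ((BXH * SH).mulVec eta0 = 0 → CovX⁻¹.mulVec CovXY = bstar) := by
  -- componentwise independences
  have hXiY : ∀ i, IndepFun (fun ω => epsX ω i) epsY μ := fun i =>
    hXY.comp (measurable_pi_apply i) measurable_id
  have hXiHq : ∀ i q, IndepFun (fun ω => epsX ω i) (fun ω => epsH ω q) μ := fun i q =>
    hXH.comp (measurable_pi_apply i) (measurable_pi_apply q)
  have hYHq : ∀ q, IndepFun epsY (fun ω => epsH ω q) μ := fun q =>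
    hYH.comp measurable_id (measurable_pi_apply q)
  -- E = epsX + BXH epsH ; its components are MemLp 2
  set E : Ω → Fin D → ℝ := fun ω => epsX ω + BXH.mulVec (epsH ω) with hE
  have hmE : ∀ k, MemLp (fun ω => E ω k) 2 μ := by
    intro k
    have : (fun ω => E ω k) = fun ω => epsX ω k + ∑ q, BXH k q * epsH ω q := by
      funext ω; simp [hE, mulVec, dotProduct]
    rw [this]
    exact (hmX k).add (memLp_finset_sum _ (fun q _ => (hmH q).const_mul _))
  have hmXi : ∀ i, MemLp (fun ω => X ω i) 2 μ := by
    intro i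
    have : (fun ω => X ω i) = fun ω => ∑ k, C i k * E ω k := by
      funext ω; rw [hX ω]; simp [mulVec, dotProduct, hE]
    rw [this]
    exact memLp_finset_sum _ (fun k _ => (hmE k).const_mul _)
  -- second moments of E against epsH and epsY
  have hEH : ∀ k q, ∫ ω, E ω k * epsH ω q ∂μ = (BXH * SH) k q := by
    intro k q
    have h1 : ∀ ω, E ω k * epsH ω q
        = epsX ω k * epsH ω q + ∑ p, BXH k p * (epsH ω p * epsH ω q) := by
      intro ω
      simp [hE, mulVec, dotProduct, add_mul, Finset.sum_mul, mul_assoc]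
    simp_rw [h1]
    rw [integral_add (aux_int_mul (hmX k) (hmH q))
        (integrable_finset_sum _ (fun p _ =>
          (aux_int_mul (hmH p) (hmH q)).const_mul _)),
      integral_finset_sum _ (fun p _ => (aux_int_mul (hmH p) (hmH q)).const_mul _)]
    simp_rw [integral_const_mul]
    rw [aux_indep_zero (hmX k) (hmH q) (hXiHq k q) (hcX k)]
    simp [hSH, Matrix.mul_apply]
  have hEY : ∀ k, ∫ ω, E ω k * epsY ω ∂μ = 0 := by
    intro k
    have h1 : ∀ ω, E ω k * epsY ω
        = epsX ω k * epsY ω + ∑ p, BXH k p * (epsH ω p * epsY ω) := by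
      intro ω
      simp [hE, mulVec, dotProduct, add_mul, Finset.sum_mul, mul_assoc]
    simp_rw [h1]
    rw [integral_add (aux_int_mul (hmX k) hmY)
        (integrable_finset_sum _ (fun p _ =>
          (aux_int_mul (hmH p) hmY).const_mul _)),
      integral_finset_sum _ (fun p _ => (aux_int_mul (hmH p) hmY).const_mul _)]
    simp_rw [integral_const_mul]
    rw [aux_indep_zero (hmX k) hmY (hXiY k) (hcX k)]
    have : ∀ p, ∫ ω, epsH ω p * epsY ω ∂μ = 0 := by
      intro p
      have := aux_indep_zero hmY (hmH p) (hYHq p) hcY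
      simp_rw [mul_comm] at this ⊢
      exact this
    simp [this]
  -- X written via E
  have hXE : ∀ ω i, X ω i = (C i) ⬝ᵥ E ω := by
    intro ω i; rw [hX ω]; rfl
  -- ∫ X i * epsH q
  have hXiH : ∀ i q, ∫ ω, X ω i * epsH ω q ∂μ = (C * BXH * SH) i q := by
    intro i q
    simp_rw [hXE]
    rw [aux_integral_dot (C i) E (fun ω => epsH ω q)
        (fun k => aux_int_mul (hmE k) (hmH q))]
    simp_rw [hEH]
    rw [Matrix.mul_assoc, Matrix.mul_apply]
  -- ∫ X i * epsY
  have hXiY' : ∀ i, ∫ ω, X ω i * epsY ω ∂μ = 0 := by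
    intro i
    simp_rw [hXE]
    rw [aux_integral_dot (C i) E epsY (fun k => aux_int_mul (hmE k) hmY)]
    simp [hEY]
  -- key identity: CovXY = CovX *ᵥ bstar + (C*BXH*SH) *ᵥ eta0
  have key : CovXY = CovX.mulVec bstar + (C * BXH * SH).mulVec eta0 := by
    funext i
    have h1 : ∀ ω, X ω i * Y ω
        = ∑ j, bstar j * (X ω i * X ω j)
          + (∑ q, eta0 q * (X ω i * epsH ω q) + X ω i * epsY ω) := by
      intro ω
      rw [hY ω, mul_add, mul_add, add_assoc]
      congr 1
      · simp only [dotProduct, Finset.mul_sum]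
        exact Finset.sum_congr rfl fun j _ => by ring
      · congr 1
        simp only [dotProduct, Finset.mul_sum]
        exact Finset.sum_congr rfl fun q _ => by ring
    have iXX : ∀ j, Integrable (fun ω => X ω i * X ω j) μ :=
      fun j => aux_int_mul (hmXi i) (hmXi j)
    have iXH : ∀ q, Integrable (fun ω => X ω i * epsH ω q) μ :=
      fun q => aux_int_mul (hmXi i) (hmH q)
    have iXY : Integrable (fun ω => X ω i * epsY ω) μ :=
      aux_int_mul (hmXi i) hmY
    rw [hCovXY i]
    simp_rw [h1]
    have i2 : Integrable (fun ω => (∑ q, eta0 q * (X ω i * epsH ω q)) + X ω i * epsY ω) μ :=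
      (integrable_finset_sum _ (fun q _ => (iXH q).const_mul _)).add iXY
    rw [integral_add (integrable_finset_sum _ (fun j _ => (iXX j).const_mul _)) i2,
      integral_add (integrable_finset_sum _ (fun q _ => (iXH q).const_mul _)) iXY,
      integral_finset_sum _ (fun j _ => (iXX j).const_mul _),
      integral_finset_sum _ (fun q _ => (iXH q).const_mul _)]
    simp_rw [integral_const_mul, hXiH, hXiY']
    simp [mulVec, dotProduct, hCovX, mul_comm]
  -- invert
  have hdet : IsUnit CovX.det := isUnit_iff_ne_zero.mpr (ne_of_gt hpd.det_pos)
  have hinv : CovX⁻¹ * CovX = 1 := Matrix.nonsing_inv_mul CovX hdet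
  have main : CovX⁻¹.mulVec CovXY = bstar + CovX⁻¹.mulVec ((C * BXH * SH).mulVec eta0) := by
    rw [key, Matrix.mulVec_add, Matrix.mulVec_mulVec, hinv, Matrix.one_mulVec]
  refine ⟨main, fun h0 => ?_⟩
  have : (C * BXH * SH).mulVec eta0 = 0 := by
    rw [Matrix.mul_assoc, ← Matrix.mulVec_mulVec, h0, Matrix.mulVec_zero]
  rw [main, this, Matrix.mulVec_zero, add_zero]
end

section
/- Let E ≥ 1 and for each e ∈ {1,…,E} let Σ_e be a D×D symmetric positive definite matrix, σ_e² > 0, β_e ∈ ℝ^D. Define L(β, η) = Σ_e (1/(2σ_e²)) (β_e − β − Σ_e⁻¹η)ᵀ Σ_e (β_e − β − Σ_e⁻¹η). If the matrix S_β = (Σ_e Σ_e⁻¹/σ_e²)(Σ_e Σ_e/σ_e²) − (Σ_e 1/σ_e²)² I_D is invertible, then the unique stationary point (β̃, η̃) of L satisfies β̃ = S_β⁻¹[(Σ_e Σ_e⁻¹/σ_e²)(Σ_e Σ_e β_e/σ_e²) − (Σ_e 1/σ_e²)(Σ_e β_e/σ_e²)]. -/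
open Matrix Finset

lemma quad_diff {D : ℕ} (M : Matrix (Fin D) (Fin D) ℝ) (x : Fin D → ℝ) :
    ∃ F : (Fin D → ℝ) →L[ℝ] ℝ, HasFDerivAt (fun y => y ⬝ᵥ M.mulVec y) F x ∧
      ∀ h, F h = h ⬝ᵥ M.mulVec x + x ⬝ᵥ M.mulVec h := by
  refine ⟨∑ i, (x i • (∑ j, M i j • (ContinuousLinearMap.proj j : (Fin D → ℝ) →L[ℝ] ℝ)) + (M.mulVec x i) • (ContinuousLinearMap.proj i : (Fin D → ℝ) →L[ℝ] ℝ)), ?_, ?_⟩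
  · have : (fun y : Fin D → ℝ => y ⬝ᵥ M.mulVec y) = fun y => ∑ i, y i * ∑ j, M i j * y j := by
      funext y; simp [dotProduct, Matrix.mulVec]
    rw [this]
    apply HasFDerivAt.fun_sum
    intro i _
    have h1 : HasFDerivAt (fun y : Fin D → ℝ => y i)
        (ContinuousLinearMap.proj i : (Fin D → ℝ) →L[ℝ] ℝ) x :=
      (ContinuousLinearMap.proj i : (Fin D → ℝ) →L[ℝ] ℝ).hasFDerivAt
    have h2 : HasFDerivAt (fun y : Fin D → ℝ => ∑ j, M i j * y j)
        (∑ j, M i j • (ContinuousLinearMap.proj j : (Fin D → ℝ) →L[ℝ] ℝ)) x := by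
      apply HasFDerivAt.fun_sum
      intro j _
      exact ((ContinuousLinearMap.proj j : (Fin D → ℝ) →L[ℝ] ℝ).hasFDerivAt).const_mul (M i j)
    simpa [Matrix.mulVec, dotProduct] using h1.fun_mul h2
  · intro h
    simp only [ContinuousLinearMap.sum_apply, ContinuousLinearMap.add_apply,
      ContinuousLinearMap.smul_apply, ContinuousLinearMap.proj_apply, smul_eq_mul,
      Finset.sum_add_distrib]
    rw [add_comm]
    congr 1
    · simp [dotProduct, Matrix.mulVec, mul_comm]

lemma L_diff {D E : ℕ} (S : Fin E → Matrix (Fin D) (Fin D) ℝ) (s2 : Fin E → ℝ)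
    (b : Fin E → Fin D → ℝ) (β η : Fin D → ℝ) :
    ∃ F : ((Fin D → ℝ) × (Fin D → ℝ)) →L[ℝ] ℝ,
      HasFDerivAt (fun p : (Fin D → ℝ) × (Fin D → ℝ) => ∑ e, (1 / (2 * s2 e)) *
        ((b e - p.1 - (S e)⁻¹.mulVec p.2) ⬝ᵥ (S e).mulVec (b e - p.1 - (S e)⁻¹.mulVec p.2)))
        F (β, η) ∧
      ∀ h : (Fin D → ℝ) × (Fin D → ℝ), F h = ∑ e, (1 / (2 * s2 e)) *
        ((-(h.1 + (S e)⁻¹.mulVec h.2)) ⬝ᵥ (S e).mulVec (b e - β - (S e)⁻¹.mulVec η)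
          + (b e - β - (S e)⁻¹.mulVec η) ⬝ᵥ (S e).mulVec (-(h.1 + (S e)⁻¹.mulVec h.2))) := by
  classical
  set v : Fin E → (Fin D → ℝ) := fun e => b e - β - (S e)⁻¹.mulVec η with hv
  have mkT : ∀ e : Fin E, ∃ T : ((Fin D → ℝ) × (Fin D → ℝ)) →L[ℝ] (Fin D → ℝ),
      ∀ p, T p = p.1 + (S e)⁻¹.mulVec p.2 := by
    intro e
    refine ⟨ContinuousLinearMap.fst ℝ _ _ +
      (LinearMap.toContinuousLinearMap ((S e)⁻¹.mulVecLin)).comp (ContinuousLinearMap.snd ℝ _ _),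
      fun p => ?_⟩
    simp
  choose T hT using mkT
  choose G hG hGapp using fun e => quad_diff (S e) (v e)
  refine ⟨∑ e, (1 / (2 * s2 e)) • ((G e).comp (0 - T e)), ?_, ?_⟩
  · apply HasFDerivAt.fun_sum
    intro e _
    have hvda : HasFDerivAt (fun p : (Fin D → ℝ) × (Fin D → ℝ) =>
        b e - p.1 - (S e)⁻¹.mulVec p.2) (0 - T e) (β, η) := by
      have : (fun p : (Fin D → ℝ) × (Fin D → ℝ) => b e - p.1 - (S e)⁻¹.mulVec p.2)
          = fun p => b e - (T e) p := by
        funext p; rw [hT, sub_sub]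
      rw [this]
      exact (hasFDerivAt_const (b e) _).sub (T e).hasFDerivAt
    have hcomp := (hG e).comp (β, η) hvda
    exact hcomp.const_mul (1 / (2 * s2 e))
  · intro h
    simp only [ContinuousLinearMap.sum_apply, ContinuousLinearMap.smul_apply,
      ContinuousLinearMap.comp_apply, ContinuousLinearMap.sub_apply,
      ContinuousLinearMap.zero_apply, smul_eq_mul]
    refine Finset.sum_congr rfl fun e _ => ?_
    rw [hGapp, hT]
    simp [hv, Matrix.mulVec_neg, dotProduct_neg, neg_dotProduct]

lemma sum_mulVec' {D E : ℕ} (M : Fin E → Matrix (Fin D) (Fin D) ℝ) (x : Fin D → ℝ) :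
    (∑ e, M e) *ᵥ x = ∑ e, M e *ᵥ x := by
  induction (univ : Finset (Fin E)) using Finset.induction with
  | empty => simp [Matrix.zero_mulVec]
  | insert a s h ih => simp [Finset.sum_insert h, Matrix.add_mulVec, ih]

/-- Any stationary point `(β, η)` of the reparametrized KL regression loss
has `β`-component equal to the closed-form KL regression solution, when the
scaling matrix `S_β` is invertible. -/
theorem kl_regression_stationary_point {D E : ℕ} (hE : 1 ≤ E)
    (S : Fin E → Matrix (Fin D) (Fin D) ℝ) (s2 : Fin E → ℝ) (b : Fin E → Fin D → ℝ)
    (hS : ∀ e, (S e).PosDef) (hs2 : ∀ e, 0 < s2 e)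
    (L : (Fin D → ℝ) × (Fin D → ℝ) → ℝ)
    (hL : ∀ p : (Fin D → ℝ) × (Fin D → ℝ),
      L p = ∑ e, (1 / (2 * s2 e)) *
        ((b e - p.1 - (S e)⁻¹.mulVec p.2) ⬝ᵥ (S e).mulVec (b e - p.1 - (S e)⁻¹.mulVec p.2)))
    (Sbeta : Matrix (Fin D) (Fin D) ℝ)
    (hSbeta : Sbeta = (∑ e, (s2 e)⁻¹ • (S e)⁻¹) * (∑ e, (s2 e)⁻¹ • S e)
      - ((∑ e, (s2 e)⁻¹) ^ 2) • (1 : Matrix (Fin D) (Fin D) ℝ))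
    (hinv : IsUnit Sbeta) :
    ∀ β η : Fin D → ℝ, fderiv ℝ L (β, η) = 0 →
      β = Sbeta⁻¹.mulVec
        ((∑ e, (s2 e)⁻¹ • (S e)⁻¹).mulVec (∑ e, (s2 e)⁻¹ • (S e).mulVec (b e))
          - (∑ e, (s2 e)⁻¹) • (∑ e, (s2 e)⁻¹ • b e)) := by
  classical
  intro β η hstat
  obtain ⟨F, hF, hFapp⟩ := L_diff S s2 b β η
  have hF' : HasFDerivAt L F (β, η) := by
    have : L = fun p : (Fin D → ℝ) × (Fin D → ℝ) => ∑ e, (1 / (2 * s2 e)) *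
        ((b e - p.1 - (S e)⁻¹.mulVec p.2) ⬝ᵥ (S e).mulVec (b e - p.1 - (S e)⁻¹.mulVec p.2)) :=
      funext hL
    rw [this]; exact hF
  have hF0 : ∀ h, F h = 0 := by
    have : (F : ((Fin D → ℝ) × (Fin D → ℝ)) →L[ℝ] ℝ) = 0 := by rw [← hF'.fderiv, hstat]
    intro h; rw [this]; rfl
  set v : Fin E → (Fin D → ℝ) := fun e => b e - β - (S e)⁻¹.mulVec η with hv
  -- basic matrix facts
  have hdet : ∀ e, IsUnit (S e).det := fun e => (hS e).det_pos.ne'.isUnit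
  have hSsym : ∀ e, (S e)ᵀ = S e := fun e => (hS e).isHermitian.eq
  have hinvsym : ∀ e, ((S e)⁻¹)ᵀ = (S e)⁻¹ := fun e => by
    rw [Matrix.transpose_nonsing_inv, hSsym]
  have hSA : ∀ e, S e * (S e)⁻¹ = 1 := fun e => Matrix.mul_nonsing_inv _ (hdet e)
  have hAS : ∀ e, (S e)⁻¹ * S e = 1 := fun e => Matrix.nonsing_inv_mul _ (hdet e)
  have hdotsym : ∀ e (x y : Fin D → ℝ), x ⬝ᵥ (S e).mulVec y = y ⬝ᵥ (S e).mulVec x := by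
    intro e x y
    rw [Matrix.dotProduct_mulVec, ← Matrix.mulVec_transpose, hSsym, dotProduct_comm]
  -- Equation 1 : from directions (h1, 0)
  have eq1 : ∑ e, (s2 e)⁻¹ • ((S e).mulVec (v e)) = 0 := by
    funext i
    have h0 := hF0 (Pi.single i 1, 0)
    rw [hFapp] at h0
    simp only [Matrix.mulVec_zero, add_zero, neg_dotProduct, Matrix.mulVec_neg,
      dotProduct_neg] at h0
    have h1 : ∑ e, (1 / (2 * s2 e)) *
        (-(Pi.single i 1 ⬝ᵥ (S e).mulVec (v e)) + -(v e ⬝ᵥ (S e).mulVec (Pi.single i (1:ℝ)))) =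
        -∑ e, (s2 e)⁻¹ * ((S e).mulVec (v e) i) := by
      rw [← Finset.sum_neg_distrib]
      refine Finset.sum_congr rfl fun e _ => ?_
      rw [hdotsym e (v e), single_dotProduct]
      have hse : s2 e ≠ 0 := ne_of_gt (hs2 e)
      field_simp
      ring
    rw [h1] at h0
    have := neg_eq_zero.mp h0
    simpa [Finset.sum_apply, Pi.smul_apply, smul_eq_mul] using this
  -- Equation 2 : from directions (0, h2)
  have eq2 : ∑ e, (s2 e)⁻¹ • v e = 0 := by
    funext i
    have h0 := hF0 (0, Pi.single i 1)
    rw [hFapp] at h0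
    simp only [zero_add, neg_dotProduct, Matrix.mulVec_neg, dotProduct_neg] at h0
    have hmv2 : ∀ (M : Matrix (Fin D) (Fin D) ℝ) (x y : Fin D → ℝ),
        (M.mulVec x) ⬝ᵥ y = x ⬝ᵥ (Mᵀ.mulVec y) := by
      intro M x y
      rw [Matrix.dotProduct_mulVec, ← Matrix.mulVec_transpose, Matrix.transpose_transpose]
    have key : ∀ e, ((S e)⁻¹.mulVec (Pi.single i (1:ℝ))) ⬝ᵥ (S e).mulVec (v e) = v e i := by
      intro e
      rw [hmv2, hinvsym, Matrix.mulVec_mulVec, hAS, Matrix.one_mulVec,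
        single_dotProduct, one_mul]
    have h1 : ∑ e, (1 / (2 * s2 e)) *
        (-((S e)⁻¹.mulVec (Pi.single i 1) ⬝ᵥ (S e).mulVec (v e)) +
          -(v e ⬝ᵥ (S e).mulVec ((S e)⁻¹.mulVec (Pi.single i (1:ℝ))))) =
        -∑ e, (s2 e)⁻¹ * (v e i) := by
      rw [← Finset.sum_neg_distrib]
      refine Finset.sum_congr rfl fun e _ => ?_
      rw [hdotsym e (v e), key e]
      have hse : s2 e ≠ 0 := ne_of_gt (hs2 e)
      field_simp
      ring
    rw [h1] at h0
    have := neg_eq_zero.mp h0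
    simpa [Finset.sum_apply, Pi.smul_apply, smul_eq_mul] using this
  -- abbreviations
  set c : ℝ := ∑ e, (s2 e)⁻¹ with hc
  set P : Matrix (Fin D) (Fin D) ℝ := ∑ e, (s2 e)⁻¹ • (S e)⁻¹ with hP
  set Q : Matrix (Fin D) (Fin D) ℝ := ∑ e, (s2 e)⁻¹ • S e with hQ
  set u : Fin D → ℝ := ∑ e, (s2 e)⁻¹ • (S e).mulVec (b e) with hu
  set w : Fin D → ℝ := ∑ e, (s2 e)⁻¹ • b e with hw
  -- rewriting eq1 : u - Q β - c η = 0
  have eq1' : Q.mulVec β = u - c • η := by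
    have expand : ∀ e, (S e).mulVec (v e) =
        (S e).mulVec (b e) - (S e).mulVec β - η := by
      intro e
      simp only [hv]
      rw [Matrix.mulVec_sub, Matrix.mulVec_sub, Matrix.mulVec_mulVec, hSA, Matrix.one_mulVec]
    have : ∑ e, (s2 e)⁻¹ • ((S e).mulVec (b e) - (S e).mulVec β - η) = 0 := by
      rw [← eq1]; exact Finset.sum_congr rfl fun e _ => by rw [expand]
    have h2 : u - Q.mulVec β - c • η = 0 := by
      rw [← this, hu, hQ, hc, sum_mulVec', ← Finset.sum_sub_distrib, Finset.sum_smul,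
        ← Finset.sum_sub_distrib]
      refine Finset.sum_congr rfl fun e _ => ?_
      rw [Matrix.smul_mulVec, smul_sub, smul_sub]
    have h3 := sub_eq_zero.mp h2
    rw [sub_eq_iff_eq_add] at h3
    rw [h3]; abel
  -- rewriting eq2 : w - c β - P η = 0
  have eq2' : P.mulVec η = w - c • β := by
    have : ∑ e, (s2 e)⁻¹ • (b e - β - (S e)⁻¹.mulVec η) = 0 := eq2
    have h2 : w - c • β - P.mulVec η = 0 := by
      rw [← this, hw, hP, hc, Finset.sum_smul, ← Finset.sum_sub_distrib, sum_mulVec',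
        ← Finset.sum_sub_distrib]
      refine Finset.sum_congr rfl fun e _ => ?_
      rw [Matrix.smul_mulVec, smul_sub, smul_sub]
    have h3 := sub_eq_zero.mp h2
    rw [sub_eq_iff_eq_add] at h3
    rw [h3]; abel
  have final : Sbeta.mulVec β = P.mulVec u - c • w := by
    rw [hSbeta, Matrix.sub_mulVec, ← Matrix.mulVec_mulVec, eq1', Matrix.mulVec_sub,
      Matrix.mulVec_smul, eq2', Matrix.smul_mulVec, Matrix.one_mulVec]
    simp only [smul_sub, smul_smul, pow_two]
    abel
  have hdet2 : IsUnit Sbeta.det := (Matrix.isUnit_iff_isUnit_det _).mp hinv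
  have hback : Sbeta⁻¹.mulVec (Sbeta.mulVec β) = β := by
    rw [Matrix.mulVec_mulVec, Matrix.nonsing_inv_mul _ hdet2, Matrix.one_mulVec]
  rw [← hback, final]
end

section
/- With the setup of the previous statement, suppose additionally that there exist β* ∈ ℝ^D and η* ∈ ℝ^D such that β_e = β* + Σ_e⁻¹η* for all e ∈ {1,…,E}, and that S_β is invertible. Then β̃ = S_β⁻¹[(Σ_e Σ_e⁻¹/σ_e²)(Σ_e Σ_e β_e/σ_e²) − (Σ_e 1/σ_e²)(Σ_e β_e/σ_e²)] equals β*. -/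
open Matrix Finset

/-- If the environment coefficients follow the confounded model
`β_e = β* + Σ_e⁻¹ η*` and `S_β` is invertible, then the KL regression
closed-form solution recovers the invariant vector `β*`. -/
theorem kl_regression_recovers_invariant {D E : ℕ} (hE : 1 ≤ E)
    (S : Fin E → Matrix (Fin D) (Fin D) ℝ) (s2 : Fin E → ℝ) (b : Fin E → Fin D → ℝ)
    (hS : ∀ e, (S e).PosDef) (hs2 : ∀ e, 0 < s2 e)
    (bstar etastar : Fin D → ℝ)
    (hmodel : ∀ e, b e = bstar + (S e)⁻¹.mulVec etastar)
    (Sbeta : Matrix (Fin D) (Fin D) ℝ)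
    (hSbeta : Sbeta = (∑ e, (s2 e)⁻¹ • (S e)⁻¹) * (∑ e, (s2 e)⁻¹ • S e)
      - ((∑ e, (s2 e)⁻¹) ^ 2) • (1 : Matrix (Fin D) (Fin D) ℝ))
    (hinv : IsUnit Sbeta) :
    Sbeta⁻¹.mulVec
        ((∑ e, (s2 e)⁻¹ • (S e)⁻¹).mulVec (∑ e, (s2 e)⁻¹ • (S e).mulVec (b e))
          - (∑ e, (s2 e)⁻¹) • (∑ e, (s2 e)⁻¹ • b e)) = bstar := by
  have hsum : ∀ (M : Fin E → Matrix (Fin D) (Fin D) ℝ) (v : Fin D → ℝ),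
      (∑ e, M e).mulVec v = ∑ e, (M e).mulVec v := by
    intro M v
    ext i
    simp [Matrix.mulVec, dotProduct, Matrix.sum_apply, Finset.sum_mul]
    rw [Finset.sum_comm]
  set A : Matrix (Fin D) (Fin D) ℝ := ∑ e, (s2 e)⁻¹ • (S e)⁻¹ with hA
  set B : Matrix (Fin D) (Fin D) ℝ := ∑ e, (s2 e)⁻¹ • S e with hB
  set c : ℝ := ∑ e, (s2 e)⁻¹ with hc
  have hdet : ∀ e, IsUnit (S e).det := fun e => isUnit_iff_ne_zero.mpr (hS e).det_pos.ne'
  have h1 : (∑ e, (s2 e)⁻¹ • (S e).mulVec (b e)) = B.mulVec bstar + c • etastar := by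
    have : ∀ e : Fin E, (s2 e)⁻¹ • (S e).mulVec (b e)
        = ((s2 e)⁻¹ • S e).mulVec bstar + (s2 e)⁻¹ • etastar := by
      intro e
      rw [hmodel e, Matrix.mulVec_add, Matrix.mulVec_mulVec,
        Matrix.mul_nonsing_inv _ (hdet e), Matrix.one_mulVec, Matrix.smul_mulVec,
        smul_add]
    rw [Finset.sum_congr rfl fun e _ => this e, Finset.sum_add_distrib,
      ← hsum, ← Finset.sum_smul]
  have h2 : (∑ e, (s2 e)⁻¹ • b e) = c • bstar + A.mulVec etastar := by
    have : ∀ e : Fin E, (s2 e)⁻¹ • b e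
        = (s2 e)⁻¹ • bstar + ((s2 e)⁻¹ • (S e)⁻¹).mulVec etastar := by
      intro e
      rw [hmodel e, smul_add, Matrix.smul_mulVec]
    rw [Finset.sum_congr rfl fun e _ => this e, Finset.sum_add_distrib,
      ← hsum, ← Finset.sum_smul]
  have key : A.mulVec (∑ e, (s2 e)⁻¹ • (S e).mulVec (b e))
      - c • (∑ e, (s2 e)⁻¹ • b e) = Sbeta.mulVec bstar := by
    rw [h1, h2, hSbeta, Matrix.sub_mulVec, Matrix.smul_mulVec, Matrix.one_mulVec,
      Matrix.mulVec_add, Matrix.mulVec_smul, ← Matrix.mulVec_mulVec]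
    simp only [smul_add, pow_two, smul_smul]
    abel
  rw [key, Matrix.mulVec_mulVec,
    Matrix.nonsing_inv_mul _ ((Matrix.isUnit_iff_isUnit_det _).mp hinv), Matrix.one_mulVec]
end

section
/- Let Σ₁,…,Σ_E be D×D symmetric positive definite matrices and σ₁²,…,σ_E² > 0. Define P_f = Σ_e Σ_e⁻¹/σ_e² − (Σ_e 1/σ_e²) Σ_f⁻¹ for each f ∈ {1,…,E}, and B = (Σ_e Σ_e⁻¹/σ_e²)(Σ_e Σ_e/σ_e²)(Σ_e Σ_e⁻¹/σ_e²) − (Σ_e 1/σ_e²)²(Σ_e Σ_e⁻¹/σ_e²). Then B = Σ_f P_f (Σ_f/σ_f²) P_f; in particular B is positive semidefinite. -/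
open Matrix Finset

private lemma smul_posSemidef {n : ℕ} {M : Matrix (Fin n) (Fin n) ℝ}
    (hM : M.PosSemidef) {c : ℝ} (hc : 0 ≤ c) : (c • M).PosSemidef := by
  refine ⟨?_, fun x => ?_⟩
  · unfold Matrix.IsHermitian
    rw [conjTranspose_smul, hM.1.eq]
    simp
  · exact (hM.smul hc).2 x

/-- The matrix `B` from the invertibility analysis of the KL regression scaling
matrix decomposes as `B = Σ_f P_f (Σ_f/σ_f²) P_f`; in particular it is
positive semidefinite. -/
theorem kl_regression_B_posSemidef {D E : ℕ} (hE : 1 ≤ E)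
    (S : Fin E → Matrix (Fin D) (Fin D) ℝ) (s2 : Fin E → ℝ)
    (hS : ∀ e, (S e).PosDef) (hs2 : ∀ e, 0 < s2 e)
    (P : Fin E → Matrix (Fin D) (Fin D) ℝ)
    (hP : ∀ f, P f = (∑ e, (s2 e)⁻¹ • (S e)⁻¹) - (∑ e, (s2 e)⁻¹) • (S f)⁻¹)
    (B : Matrix (Fin D) (Fin D) ℝ)
    (hB : B = (∑ e, (s2 e)⁻¹ • (S e)⁻¹) * (∑ e, (s2 e)⁻¹ • S e) * (∑ e, (s2 e)⁻¹ • (S e)⁻¹)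
      - ((∑ e, (s2 e)⁻¹) ^ 2) • (∑ e, (s2 e)⁻¹ • (S e)⁻¹)) :
    B = ∑ f, P f * ((s2 f)⁻¹ • S f) * P f ∧ B.PosSemidef := by
  have hinv1 : ∀ f, (S f)⁻¹ * S f = 1 := fun f =>
    nonsing_inv_mul _ (isUnit_iff_ne_zero.mpr (hS f).det_pos.ne')
  have hinv2 : ∀ f, S f * (S f)⁻¹ = 1 := fun f =>
    mul_nonsing_inv _ (isUnit_iff_ne_zero.mpr (hS f).det_pos.ne')
  set A : Matrix (Fin D) (Fin D) ℝ := ∑ e, (s2 e)⁻¹ • (S e)⁻¹ with hA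
  set c : ℝ := ∑ e, (s2 e)⁻¹ with hc
  have hAdef : A = ∑ e, (s2 e)⁻¹ • (S e)⁻¹ := hA
  have hcdef : c = ∑ e, (s2 e)⁻¹ := hc
  clear_value A c
  have key : ∀ f, P f * ((s2 f)⁻¹ • S f) * P f
      = (s2 f)⁻¹ • (A * S f * A) - ((s2 f)⁻¹ * c) • A - ((s2 f)⁻¹ * c) • A
        + ((s2 f)⁻¹ * c * c) • (S f)⁻¹ := by
    intro f
    rw [hP]
    simp only [sub_mul, mul_sub, Matrix.smul_mul, Matrix.mul_smul, smul_smul,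
      mul_assoc, hinv1, hinv2, Matrix.mul_one, Matrix.one_mul, smul_sub]
    module
  have hsum : ∑ f, P f * ((s2 f)⁻¹ • S f) * P f
      = A * (∑ e, (s2 e)⁻¹ • S e) * A - (c ^ 2) • A := by
    simp only [key]
    rw [Finset.sum_add_distrib, Finset.sum_sub_distrib, Finset.sum_sub_distrib]
    rw [← Finset.sum_smul, ← Finset.sum_mul, ← hcdef]
    have e1 : ∑ f, (s2 f)⁻¹ • (A * S f * A) = A * (∑ e, (s2 e)⁻¹ • S e) * A := by
      rw [Finset.mul_sum, Finset.sum_mul]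
      refine Finset.sum_congr rfl fun f _ => ?_
      rw [Matrix.mul_smul, Matrix.smul_mul]
    have e2 : ∑ f, ((s2 f)⁻¹ * c * c) • (S f)⁻¹ = (c * c) • A := by
      rw [hAdef, Finset.smul_sum]
      refine Finset.sum_congr rfl fun f _ => ?_
      rw [smul_smul]; ring_nf
    rw [e1, e2]
    module
  have hBsum : B = ∑ f, P f * ((s2 f)⁻¹ • S f) * P f := by
    rw [hB, hsum]
  refine ⟨hBsum, ?_⟩
  rw [hBsum]
  have hPH : ∀ f, (P f)ᴴ = P f := by
    intro f
    rw [hP, hAdef]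
    simp only [conjTranspose_sub, conjTranspose_smul, conjTranspose_sum, star_trivial]
    congr 1
    · exact Finset.sum_congr rfl fun e _ => by rw [(hS e).inv.isHermitian.eq]
    · rw [(hS f).inv.isHermitian.eq]
  have hterm : ∀ f ∈ Finset.univ, (P f * ((s2 f)⁻¹ • S f) * P f).PosSemidef := by
    intro f _
    have hpsd : ((s2 f)⁻¹ • S f).PosSemidef :=
      smul_posSemidef (hS f).posSemidef (inv_nonneg.mpr (hs2 f).le)
    have := hpsd.mul_mul_conjTranspose_same (P f)
    rwa [hPH f] at this
  exact Finset.sum_induction _ _ (fun a b ha hb => ha.add hb) Matrix.PosSemidef.zero hterm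
end

section
/- Let Σ₁,…,Σ_E be D×D symmetric positive definite matrices and σ₁²,…,σ_E² > 0. Define S_β = (Σ_e Σ_e⁻¹/σ_e²)(Σ_e Σ_e/σ_e²) − (Σ_e 1/σ_e²)² I_D. If there exists e* ∈ {1,…,E} such that the matrix Σ_{e*}⁻¹ − (Σ_e 1/σ_e²)⁻¹(Σ_e Σ_e⁻¹/σ_e²) is invertible, then S_β is invertible. -/
open Matrix Finset

lemma aux_smul_posDef {n : Type*} [Fintype n] {M : Matrix n n ℝ} (hM : M.PosDef)
    {a : ℝ} (ha : 0 < a) : (a • M).PosDef := by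
  refine Matrix.PosDef.of_dotProduct_mulVec_pos ?_ fun x hx => ?_
  · unfold Matrix.IsHermitian
    rw [conjTranspose_smul, hM.1]
    simp
  · have := hM.dotProduct_mulVec_pos hx
    simp only [smul_mulVec, dotProduct_smul, smul_eq_mul]
    positivity

lemma aux_smul_posSemidef {n : Type*} [Fintype n] {M : Matrix n n ℝ} (hM : M.PosSemidef)
    {a : ℝ} (ha : 0 ≤ a) : (a • M).PosSemidef := by
  refine Matrix.PosSemidef.of_dotProduct_mulVec_nonneg ?_ fun x => ?_
  · unfold Matrix.IsHermitian
    rw [conjTranspose_smul, hM.1]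
    simp
  · have := hM.dotProduct_mulVec_nonneg x
    simp only [smul_mulVec, dotProduct_smul, smul_eq_mul]
    positivity

lemma aux_conj_posDef {n : Type*} [Fintype n] [DecidableEq n] {M B : Matrix n n ℝ}
    (hM : M.PosDef) (hB : IsUnit B) : (Bᴴ * M * B).PosDef := by
  refine Matrix.PosDef.of_dotProduct_mulVec_pos (isHermitian_conjTranspose_mul_mul B hM.1) fun x hx => ?_
  have hBx : B *ᵥ x ≠ 0 := by
    intro h
    apply hx
    have := congrArg (fun v => B⁻¹ *ᵥ v) h
    simpa [mulVec_mulVec, Matrix.nonsing_inv_mul B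
      ((Matrix.isUnit_iff_isUnit_det B).mp hB)] using this
  simpa only [star_mulVec, dotProduct_mulVec, vecMul_vecMul] using hM.dotProduct_mulVec_pos hBx

/-- Bhagwat–Subramanian invertibility criterion for the KL regression scaling
matrix `S_β`: if for some environment `e*` the matrix
`Σ_{e*}⁻¹ − (Σ_e 1/σ_e²)⁻¹ (Σ_e Σ_e⁻¹/σ_e²)` is invertible, then `S_β` is
invertible. -/
theorem kl_regression_Sbeta_invertible {D E : ℕ} (hE : 1 ≤ E)
    (S : Fin E → Matrix (Fin D) (Fin D) ℝ) (s2 : Fin E → ℝ)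
    (hS : ∀ e, (S e).PosDef) (hs2 : ∀ e, 0 < s2 e)
    (Sbeta : Matrix (Fin D) (Fin D) ℝ)
    (hSbeta : Sbeta = (∑ e, (s2 e)⁻¹ • (S e)⁻¹) * (∑ e, (s2 e)⁻¹ • S e)
      - ((∑ e, (s2 e)⁻¹) ^ 2) • (1 : Matrix (Fin D) (Fin D) ℝ))
    (hcrit : ∃ estar : Fin E,
      IsUnit ((S estar)⁻¹ - (∑ e, (s2 e)⁻¹)⁻¹ • (∑ e, (s2 e)⁻¹ • (S e)⁻¹))) :
    IsUnit Sbeta := by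
  obtain ⟨estar, hstar⟩ := hcrit
  obtain ⟨c, hc⟩ : ∃ c : ℝ, c = ∑ e, (s2 e)⁻¹ := ⟨_, rfl⟩
  obtain ⟨T, hT⟩ : ∃ T : Matrix (Fin D) (Fin D) ℝ, T = ∑ e, (s2 e)⁻¹ • (S e)⁻¹ := ⟨_, rfl⟩
  obtain ⟨U, hU⟩ : ∃ U : Matrix (Fin D) (Fin D) ℝ, U = ∑ e, (s2 e)⁻¹ • S e := ⟨_, rfl⟩
  rw [← hc, ← hT] at hstar
  rw [← hc, ← hT, ← hU] at hSbeta
  have hcpos : 0 < c := by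
    rw [hc]
    exact Finset.sum_pos (fun e _ => inv_pos.mpr (hs2 e)) ⟨estar, mem_univ _⟩
  have hcne : c ≠ 0 := ne_of_gt hcpos
  -- T is positive definite
  have hTpd : T.PosDef := by
    rw [hT, ← Finset.add_sum_erase _ _ (mem_univ estar)]
    refine Matrix.PosDef.add_posSemidef
      (aux_smul_posDef (hS estar).inv (inv_pos.mpr (hs2 estar))) ?_
    refine Finset.sum_induction _ _ (fun a b ha hb => ha.add hb) Matrix.PosSemidef.zero
      fun f _ => aux_smul_posSemidef (hS f).inv.posSemidef (le_of_lt (inv_pos.mpr (hs2 f)))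
  -- the conjugating matrices
  set P : Fin E → Matrix (Fin D) (Fin D) ℝ := fun f => T - c • (S f)⁻¹ with hP
  have hermP : ∀ f, (P f)ᴴ = P f := by
    intro f
    show (T - c • (S f)⁻¹)ᴴ = T - c • (S f)⁻¹
    rw [conjTranspose_sub, conjTranspose_smul, hTpd.1, ((hS f).inv).1]
    simp
  have hSinv : ∀ f, (S f)⁻¹ * S f = 1 :=
    fun f => Matrix.nonsing_inv_mul _ ((Matrix.isUnit_iff_isUnit_det _).mp (hS f).isUnit)
  have hSinv' : ∀ f, S f * (S f)⁻¹ = 1 :=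
    fun f => Matrix.mul_nonsing_inv _ ((Matrix.isUnit_iff_isUnit_det _).mp (hS f).isUnit)
  -- key algebraic identity per environment
  have key : ∀ f, P f * S f * P f
      = T * S f * T - c • T - c • T + (c*c) • (S f)⁻¹ := by
    intro f
    show (T - c • (S f)⁻¹) * S f * (T - c • (S f)⁻¹) = _
    have e1 : (T - c • (S f)⁻¹) * S f = T * S f - c • 1 := by
      rw [sub_mul, smul_mul_assoc, hSinv f]
    rw [e1, sub_mul, mul_sub, mul_sub, mul_smul_comm c (T * S f) ((S f)⁻¹),
      Matrix.mul_assoc T (S f) (S f)⁻¹, hSinv' f, Matrix.mul_one,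
      smul_mul_assoc c 1 T, Matrix.one_mul, smul_mul_assoc c 1 (c • (S f)⁻¹),
      Matrix.one_mul, smul_smul]
    module
  -- expand the factorized sum
  have hTUT : T * U * T = ∑ f, (s2 f)⁻¹ • (T * S f * T) := by
    rw [hU, Finset.mul_sum, Finset.sum_mul]
    exact Finset.sum_congr rfl fun f _ => by
      rw [mul_smul_comm ((s2 f)⁻¹) T (S f), smul_mul_assoc ((s2 f)⁻¹) (T * S f) T]
  have expand : ∑ f, (s2 f)⁻¹ • (P f * S f * P f) = T * U * T - (c*c) • T := by
    calc ∑ f, (s2 f)⁻¹ • (P f * S f * P f)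
        = ∑ f, ((s2 f)⁻¹ • (T * S f * T) - ((s2 f)⁻¹ * c) • T - ((s2 f)⁻¹ * c) • T
            + ((c * c) * (s2 f)⁻¹) • (S f)⁻¹) := by
          refine Finset.sum_congr rfl fun f _ => ?_
          rw [key f]
          module
      _ = (∑ f, (s2 f)⁻¹ • (T * S f * T)) - (∑ f, (s2 f)⁻¹ * c) • T
            - (∑ f, (s2 f)⁻¹ * c) • T + (c*c) • ∑ f, (s2 f)⁻¹ • (S f)⁻¹ := by
          rw [Finset.sum_add_distrib, Finset.sum_sub_distrib, Finset.sum_sub_distrib,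
            ← Finset.sum_smul]
          congr 1
          rw [Finset.smul_sum]
          exact Finset.sum_congr rfl fun f _ => mul_smul _ _ _
      _ = T * U * T - (c * c) • T - (c * c) • T + (c*c) • T := by
          rw [← hTUT, ← hT, ← Finset.sum_mul, ← hc]
      _ = T * U * T - (c*c) • T := by module
  have hfact : Sbeta * T = ∑ f, (s2 f)⁻¹ • (P f * S f * P f) := by
    rw [expand, hSbeta, sub_mul, smul_mul_assoc, Matrix.one_mul, pow_two]
  -- P estar is a unit
  have hPunit : IsUnit (P estar) := by
    have hPeq : P estar = (-c) • ((S estar)⁻¹ - c⁻¹ • T) := by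
      show T - c • (S estar)⁻¹ = _
      rw [smul_sub, smul_smul, neg_mul, mul_inv_cancel₀ hcne]
      module
    rw [hPeq]
    have := hstar.smul (Units.mk0 (-c) (neg_ne_zero.mpr hcne))
    simpa [Units.smul_def] using this
  -- the factorized sum is positive definite
  have hBpd : (∑ f, (s2 f)⁻¹ • (P f * S f * P f)).PosDef := by
    rw [← Finset.add_sum_erase _ _ (mem_univ estar)]
    refine Matrix.PosDef.add_posSemidef ?_ ?_
    · have h1 := aux_conj_posDef (hS estar) hPunit
      rw [hermP estar] at h1
      exact aux_smul_posDef h1 (inv_pos.mpr (hs2 estar))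
    · refine Finset.sum_induction _ _ (fun a b ha hb => ha.add hb) Matrix.PosSemidef.zero
        fun f _ => ?_
      have h1 := (hS f).posSemidef.conjTranspose_mul_mul_same (P f)
      rw [hermP f] at h1
      exact aux_smul_posSemidef h1 (le_of_lt (inv_pos.mpr (hs2 f)))
  -- conclude
  have hmul : IsUnit (Sbeta * T) := hfact ▸ hBpd.isUnit
  rw [Matrix.isUnit_iff_isUnit_det] at hmul ⊢
  rw [Matrix.det_mul] at hmul
  exact isUnit_of_mul_isUnit_left hmul
end

section
/- Let E = 2, D ≥ 1, Σ₁, Σ₂ symmetric positive definite D×D matrices, and σ₁² = σ₂² = 1. If Σ₂⁻¹Σ₁ − I_D is invertible, then S_β = (Σ₁⁻¹ + Σ₂⁻¹)(Σ₁ + Σ₂) − 4 I_D is invertible. -/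
open Matrix

/-- Two-environment specialization (unit residual variances): if
`Σ₂⁻¹Σ₁ − I` is invertible then `S_β = (Σ₁⁻¹+Σ₂⁻¹)(Σ₁+Σ₂) − 4I` is
invertible. -/
theorem kl_regression_two_environments {D : ℕ} (hD : 1 ≤ D)
    (S1 S2 : Matrix (Fin D) (Fin D) ℝ)
    (hS1 : S1.PosDef) (hS2 : S2.PosDef)
    (h : IsUnit (S2⁻¹ * S1 - 1)) :
    IsUnit ((S1⁻¹ + S2⁻¹) * (S1 + S2) - (4 : ℝ) • (1 : Matrix (Fin D) (Fin D) ℝ)) := by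
  have h1 : IsUnit S1.det := isUnit_iff_ne_zero.mpr (ne_of_gt hS1.det_pos)
  have h2 : IsUnit S2.det := isUnit_iff_ne_zero.mpr (ne_of_gt hS2.det_pos)
  have h1' : S1⁻¹ * S1 = 1 := Matrix.nonsing_inv_mul _ h1
  have h1'' : S1 * S1⁻¹ = 1 := Matrix.mul_nonsing_inv _ h1
  have h2' : S2⁻¹ * S2 = 1 := Matrix.nonsing_inv_mul _ h2
  have h2'' : S2 * S2⁻¹ = 1 := Matrix.mul_nonsing_inv _ h2
  set X : Matrix (Fin D) (Fin D) ℝ := S1⁻¹ * S2 with hX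
  set Y : Matrix (Fin D) (Fin D) ℝ := S2⁻¹ * S1 with hY
  have hXunit : IsUnit X := by
    apply (Matrix.isUnit_iff_isUnit_det _).mpr
    rw [hX, Matrix.det_mul]
    exact (Matrix.isUnit_nonsing_inv_det_iff.mpr h1).mul h2
  have hXY : X * Y = 1 := by
    rw [hX, hY, Matrix.mul_assoc, ← Matrix.mul_assoc S2, h2'', Matrix.one_mul, h1']
  have h4 : (4 : ℝ) • (1 : Matrix (Fin D) (Fin D) ℝ) = 1 + 1 + 1 + 1 := by
    rw [Algebra.smul_def, mul_one, map_ofNat]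
    norm_num
  have key : (S1⁻¹ + S2⁻¹) * (S1 + S2) - (4 : ℝ) • (1 : Matrix (Fin D) (Fin D) ℝ)
      = X * ((Y - 1) * (Y - 1)) := by
    have e1 : X * ((Y - 1) * (Y - 1)) = X * Y * Y - X * Y - X * Y + X := by
      noncomm_ring
    rw [e1, hXY, Matrix.one_mul]
    have e2 : (S1⁻¹ + S2⁻¹) * (S1 + S2)
        = S1⁻¹ * S1 + X + (Y + S2⁻¹ * S2) := by noncomm_ring
    rw [e2, h1', h2', h4]
    noncomm_ring
  rw [key]
  exact hXunit.mul (h.mul h)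
end

section
/- Let Σ₁,…,Σ_E be D×D symmetric positive definite matrices and σ_e² > 0, with S_β invertible. Define W = S_β⁻¹[(Σ_e Σ_e⁻¹/σ_e) Ū − (Σ_e 1/σ_e²) Ī] as the linear map sending stacked per-environment coefficients (β_e/σ_e)_{e} to the KL regression output. Then the matrix 𝕀ᵀA𝕀 appearing in the conditional covariance satisfies 𝕀ᵀA𝕀 = (Σ_e Σ_e⁻¹/σ_e²) S_βᵀ, and consequently, when all environments have n samples, the conditional covariance of the plug-in KL regression estimator (for Gaussian noise, conditioned on covariates, with known σ_e²) equals V = (1/n) S_β⁻¹ (Σ_e Σ_e⁻¹/σ_e²). -/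
open Matrix Finset

/-- Gram identity for stacked matrices: `(stack M)ᵀ * (stack N) = ∑ σ_e⁻² (M e)ᵀ N e`. -/
lemma stack_gram {D E : ℕ} (sig : Fin E → ℝ)
    (M N : Fin E → Matrix (Fin D) (Fin D) ℝ) :
    ((Matrix.of fun p j => (sig p.1)⁻¹ * M p.1 p.2 j : Matrix (Fin E × Fin D) (Fin D) ℝ))ᵀ *
      (Matrix.of fun p j => (sig p.1)⁻¹ * N p.1 p.2 j : Matrix (Fin E × Fin D) (Fin D) ℝ) =
      ∑ e, ((sig e) ^ 2)⁻¹ • ((M e)ᵀ * N e) := by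
  ext i j
  simp [Matrix.mul_apply, Fintype.sum_prod_type, Matrix.sum_apply, Finset.mul_sum, sq, mul_inv]
  refine Finset.sum_congr rfl fun e _ => Finset.sum_congr rfl fun k _ => by ring

/-- Sandwich identity: `(stack M)ᵀ * blockdiag(S_e⁻¹) * (stack N) = ∑ σ_e⁻² (M e)ᵀ S_e⁻¹ N e`. -/
lemma stack_sandwich {D E : ℕ} (S : Fin E → Matrix (Fin D) (Fin D) ℝ) (sig : Fin E → ℝ)
    (M N : Fin E → Matrix (Fin D) (Fin D) ℝ) :
    ((Matrix.of fun p j => (sig p.1)⁻¹ * M p.1 p.2 j : Matrix (Fin E × Fin D) (Fin D) ℝ))ᵀ *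
      (Matrix.of (fun p q => if p.1 = q.1 then (S p.1)⁻¹ p.2 q.2 else 0) :
        Matrix (Fin E × Fin D) (Fin E × Fin D) ℝ) *
      (Matrix.of fun p j => (sig p.1)⁻¹ * N p.1 p.2 j : Matrix (Fin E × Fin D) (Fin D) ℝ) =
      ∑ e, ((sig e) ^ 2)⁻¹ • ((M e)ᵀ * (S e)⁻¹ * N e) := by
  ext i j
  simp [Matrix.mul_apply, Fintype.sum_prod_type, Matrix.sum_apply, Finset.mul_sum, Finset.sum_mul,
    sq, mul_inv, ite_mul, mul_ite]
  refine Finset.sum_congr rfl fun e _ => ?_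
  refine Finset.sum_congr rfl fun l _ => ?_
  refine Finset.sum_congr rfl fun k _ => by ring

/-- Matrix-algebra identity behind the conditional covariance of the KL
regression estimator: with stacked matrices `𝕌, 𝕍, 𝕀` (blocks `Σ_e/σ_e`,
`Σ_e⁻¹/σ_e`, `I/σ_e`) and `A = (𝕍𝕌ᵀ − 𝕀𝕀ᵀ) diag(Σ_e⁻¹) (𝕌𝕍ᵀ − 𝕀𝕀ᵀ)`, one has
`𝕀ᵀA𝕀 = (Σ_e Σ_e⁻¹/σ_e²) S_βᵀ`; consequently, with `n` samples per
environment, the conditional covariance `V = (1/n) S_β⁻¹ 𝕀ᵀA𝕀 S_β⁻ᵀ` equals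
`(1/n) S_β⁻¹ (Σ_e Σ_e⁻¹/σ_e²)`. -/
theorem kl_regression_conditional_covariance {D E : ℕ} (hE : 1 ≤ E)
    (S : Fin E → Matrix (Fin D) (Fin D) ℝ) (sig : Fin E → ℝ)
    (hS : ∀ e, (S e).PosDef) (hsig : ∀ e, 0 < sig e)
    (U Vm II : Matrix (Fin E × Fin D) (Fin D) ℝ)
    (hU : U = Matrix.of fun p j => (sig p.1)⁻¹ * S p.1 p.2 j)
    (hV : Vm = Matrix.of fun p j => (sig p.1)⁻¹ * (S p.1)⁻¹ p.2 j)
    (hII : II = Matrix.of fun p j => (sig p.1)⁻¹ * (1 : Matrix (Fin D) (Fin D) ℝ) p.2 j)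
    (Dblk : Matrix (Fin E × Fin D) (Fin E × Fin D) ℝ)
    (hDblk : Dblk = Matrix.of fun p q => if p.1 = q.1 then (S p.1)⁻¹ p.2 q.2 else 0)
    (A : Matrix (Fin E × Fin D) (Fin E × Fin D) ℝ)
    (hA : A = (Vm * Uᵀ - II * IIᵀ) * Dblk * (U * Vmᵀ - II * IIᵀ))
    (Sbeta : Matrix (Fin D) (Fin D) ℝ)
    (hSbeta : Sbeta = (∑ e, ((sig e) ^ 2)⁻¹ • (S e)⁻¹) * (∑ e, ((sig e) ^ 2)⁻¹ • S e)
      - ((∑ e, ((sig e) ^ 2)⁻¹) ^ 2) • (1 : Matrix (Fin D) (Fin D) ℝ))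
    (hinv : IsUnit Sbeta) :
    IIᵀ * A * II = (∑ e, ((sig e) ^ 2)⁻¹ • (S e)⁻¹) * Sbetaᵀ ∧
    (∀ n : ℕ, 0 < n →
      ((n : ℝ))⁻¹ • (Sbeta⁻¹ * (IIᵀ * A * II) * (Sbeta⁻¹)ᵀ) =
        ((n : ℝ))⁻¹ • (Sbeta⁻¹ * ∑ e, ((sig e) ^ 2)⁻¹ • (S e)⁻¹)) := by
  set P : Matrix (Fin D) (Fin D) ℝ := ∑ e, ((sig e) ^ 2)⁻¹ • (S e)⁻¹ with hP
  set Q : Matrix (Fin D) (Fin D) ℝ := ∑ e, ((sig e) ^ 2)⁻¹ • S e with hQ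
  set c : ℝ := ∑ e, ((sig e) ^ 2)⁻¹ with hc
  -- symmetry and invertibility facts
  have hsym : ∀ e, (S e)ᵀ = S e := by
    intro e
    have := (hS e).1
    simpa [Matrix.IsHermitian, Matrix.conjTranspose_eq_transpose_of_trivial] using this
  have hsyminv : ∀ e, ((S e)⁻¹)ᵀ = (S e)⁻¹ := by
    intro e
    rw [Matrix.transpose_nonsing_inv, hsym]
  have hdet : ∀ e, IsUnit (S e).det := fun e =>
    isUnit_iff_ne_zero.mpr (ne_of_gt (hS e).det_pos)
  have hmulinv : ∀ e, S e * (S e)⁻¹ = 1 := fun e => Matrix.mul_nonsing_inv _ (hdet e)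
  have hinvmul : ∀ e, (S e)⁻¹ * S e = 1 := fun e => Matrix.nonsing_inv_mul _ (hdet e)
  have hPT : Pᵀ = P := by
    rw [hP, Matrix.transpose_sum]
    exact Finset.sum_congr rfl fun e _ => by rw [Matrix.transpose_smul, hsyminv]
  have hQT : Qᵀ = Q := by
    rw [hQ, Matrix.transpose_sum]
    exact Finset.sum_congr rfl fun e _ => by rw [Matrix.transpose_smul, hsym]
  -- gram products
  have hIV : IIᵀ * Vm = P := by
    rw [hII, hV, stack_gram sig (fun _ => (1 : Matrix (Fin D) (Fin D) ℝ)) (fun e => (S e)⁻¹)]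
    exact Finset.sum_congr rfl fun e _ => by rw [Matrix.transpose_one, Matrix.one_mul]
  have hVI : Vmᵀ * II = P := by
    have : (IIᵀ * Vm)ᵀ = Pᵀ := by rw [hIV]
    rw [Matrix.transpose_mul, Matrix.transpose_transpose, hPT] at this
    exact this
  have hII2 : IIᵀ * II = c • (1 : Matrix (Fin D) (Fin D) ℝ) := by
    rw [hII, stack_gram sig (fun _ => (1 : Matrix (Fin D) (Fin D) ℝ)) (fun _ => (1 : Matrix (Fin D) (Fin D) ℝ)), hc, Finset.sum_smul]
    exact Finset.sum_congr rfl fun e _ => by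
      rw [Matrix.transpose_one, Matrix.one_mul]
  -- sandwich products
  have hSS : Uᵀ * Dblk * U = Q := by
    rw [hU, hDblk, stack_sandwich S sig S S]
    exact Finset.sum_congr rfl fun e _ => by
      rw [hsym, hmulinv, Matrix.one_mul]
  have hSI : Uᵀ * Dblk * II = c • (1 : Matrix (Fin D) (Fin D) ℝ) := by
    rw [hU, hII, hDblk, stack_sandwich S sig S (fun _ => (1 : Matrix (Fin D) (Fin D) ℝ)), hc, Finset.sum_smul]
    exact Finset.sum_congr rfl fun e _ => by
      rw [hsym, Matrix.mul_one, hmulinv]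
  have hIS : IIᵀ * Dblk * U = c • (1 : Matrix (Fin D) (Fin D) ℝ) := by
    rw [hII, hU, hDblk, stack_sandwich S sig (fun _ => (1 : Matrix (Fin D) (Fin D) ℝ)) S, hc, Finset.sum_smul]
    exact Finset.sum_congr rfl fun e _ => by
      rw [Matrix.transpose_one, Matrix.one_mul, hinvmul]
  have hIDI : IIᵀ * Dblk * II = P := by
    rw [hII, hDblk, stack_sandwich S sig (fun _ => (1 : Matrix (Fin D) (Fin D) ℝ)) (fun _ => (1 : Matrix (Fin D) (Fin D) ℝ))]
    exact Finset.sum_congr rfl fun e _ => by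
      rw [Matrix.transpose_one, Matrix.one_mul, Matrix.mul_one]
  -- expand IIᵀ A II
  have expand : IIᵀ * A * II =
      (IIᵀ * Vm) * (Uᵀ * Dblk * U) * (Vmᵀ * II)
      - (IIᵀ * Vm) * (Uᵀ * Dblk * II) * (IIᵀ * II)
      - (IIᵀ * II) * (IIᵀ * Dblk * U) * (Vmᵀ * II)
      + (IIᵀ * II) * (IIᵀ * Dblk * II) * (IIᵀ * II) := by
    rw [hA]; simp only [Matrix.sub_mul, Matrix.mul_sub, Matrix.mul_assoc]; abel
  have key : IIᵀ * A * II = P * Sbetaᵀ := by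
    rw [expand, hIV, hVI, hII2, hSS, hSI, hIS, hIDI, hSbeta]
    rw [Matrix.transpose_sub, Matrix.transpose_mul, Matrix.transpose_smul,
      Matrix.transpose_one, hPT, hQT]
    simp only [Matrix.mul_smul, Matrix.smul_mul, Matrix.one_mul, Matrix.mul_one,
      smul_smul, Matrix.mul_sub, sq, Matrix.mul_assoc]
    abel
  refine ⟨key, fun n hn => ?_⟩
  have h1 : Sbeta⁻¹ * Sbeta = 1 :=
    Matrix.nonsing_inv_mul _ ((Matrix.isUnit_iff_isUnit_det _).mp hinv)
  congr 1
  rw [key]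
  calc Sbeta⁻¹ * (P * Sbetaᵀ) * (Sbeta⁻¹)ᵀ
      = Sbeta⁻¹ * P * (Sbetaᵀ * (Sbeta⁻¹)ᵀ) := by noncomm_ring
    _ = Sbeta⁻¹ * P * (Sbeta⁻¹ * Sbeta)ᵀ := by rw [Matrix.transpose_mul]
    _ = Sbeta⁻¹ * P := by rw [h1, Matrix.transpose_one, Matrix.mul_one]
end

section
/- Let Σ₁,…,Σ_E be D×D symmetric positive definite matrices and σ_e² > 0. Define A = (Σ_e Σ_e/σ_e²) − (Σ_e 1/σ_e²)²(Σ_e Σ_e⁻¹/σ_e²)⁻¹. Then A is symmetric positive semidefinite. -/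
open Matrix Finset

private lemma psd_smul' {n : Type*} [Fintype n] {M : Matrix n n ℝ} (hM : M.PosSemidef)
    {c : ℝ} (hc : 0 ≤ c) : (c • M).PosSemidef := by
  refine ⟨?_, fun x => ?_⟩
  · have h1 := hM.1
    unfold Matrix.IsHermitian at h1 ⊢
    rw [conjTranspose_smul, h1, star_trivial]
  · convert mul_nonneg hc (hM.2 x) using 1
    simp only [Finsupp.mul_sum, Matrix.smul_apply, smul_eq_mul, star_trivial]
    exact Finsupp.sum_congr fun i _ => Finsupp.sum_congr fun j _ => by ring

private lemma pd_smul' {n : Type*} [Fintype n] {M : Matrix n n ℝ} (hM : M.PosDef)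
    {c : ℝ} (hc : 0 < c) : (c • M).PosDef := by
  refine ⟨?_, fun x hx => ?_⟩
  · have h1 := hM.1
    unfold Matrix.IsHermitian at h1 ⊢
    rw [conjTranspose_smul, h1, star_trivial]
  · convert mul_pos hc (hM.2 hx) using 1
    simp only [Finsupp.mul_sum, Matrix.smul_apply, smul_eq_mul, star_trivial]
    exact Finsupp.sum_congr fun i _ => Finsupp.sum_congr fun j _ => by ring

private lemma psd_sum {n : Type*} [Fintype n] {ι : Type*} (t : Finset ι)
    (f : ι → Matrix n n ℝ) (h : ∀ i ∈ t, (f i).PosSemidef) :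
    (∑ i ∈ t, f i).PosSemidef := by
  classical
  induction t using Finset.induction_on with
  | empty => simpa using Matrix.PosSemidef.zero
  | insert _ _ hni ih =>
    rw [Finset.sum_insert hni]
    exact (h _ (Finset.mem_insert_self _ _)).add
      (ih fun i hi => h i (Finset.mem_insert_of_mem hi))

/-- Weighted matrix arithmetic–harmonic mean inequality:
`A = (Σ_e Σ_e/σ_e²) − (Σ_e 1/σ_e²)² (Σ_e Σ_e⁻¹/σ_e²)⁻¹` is symmetric
positive semidefinite. -/
theorem kl_regression_A_posSemidef {D E : ℕ} (hE : 1 ≤ E)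
    (S : Fin E → Matrix (Fin D) (Fin D) ℝ) (s2 : Fin E → ℝ)
    (hS : ∀ e, (S e).PosDef) (hs2 : ∀ e, 0 < s2 e) :
    ((∑ e, (s2 e)⁻¹ • S e)
      - ((∑ e, (s2 e)⁻¹) ^ 2) • (∑ e, (s2 e)⁻¹ • (S e)⁻¹)⁻¹).PosSemidef := by
  classical
  set c : ℝ := ∑ e, (s2 e)⁻¹ with hc
  set M : Matrix (Fin D) (Fin D) ℝ := ∑ e, (s2 e)⁻¹ • S e with hM
  set H : Matrix (Fin D) (Fin D) ℝ := ∑ e, (s2 e)⁻¹ • (S e)⁻¹ with hH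
  clear_value c M H
  have hdet : ∀ f, IsUnit (S f).det := fun f => (isUnit_iff_isUnit_det _).1 (hS f).isUnit
  have hHpd : H.PosDef := by
    have : Nonempty (Fin E) := Fin.pos_iff_nonempty.mp hE
    obtain ⟨e₀, -⟩ := (Finset.univ_nonempty : (Finset.univ : Finset (Fin E)).Nonempty)
    rw [hH, ← Finset.add_sum_erase _ _ (Finset.mem_univ e₀)]
    exact (pd_smul' (hS e₀).inv (inv_pos.mpr (hs2 e₀))).add_posSemidef
      (psd_sum _ _ fun i _ => psd_smul' (hS i).inv.posSemidef (inv_pos.mpr (hs2 i)).le)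
  have hHdet : IsUnit H.det := (isUnit_iff_isUnit_det _).1 hHpd.isUnit
  -- per-term expansion
  have hterm : ∀ f : Fin E, (H - c • (S f)⁻¹) * S f * (H - c • (S f)⁻¹)
      = H * S f * H - c • H - c • H + (c * c) • (S f)⁻¹ := by
    intro f
    have h1 : S f * (S f)⁻¹ = 1 := mul_nonsing_inv _ (hdet f)
    have h2 : (S f)⁻¹ * S f = 1 := nonsing_inv_mul _ (hdet f)
    rw [sub_mul, sub_mul, mul_sub, mul_sub]
    simp only [Matrix.smul_mul, Matrix.mul_smul, Matrix.mul_assoc, h1, h2,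
      Matrix.mul_one, Matrix.one_mul, smul_smul]
    abel
  -- sum identity
  have hB : ∑ f, (s2 f)⁻¹ • ((H - c • (S f)⁻¹) * S f * (H - c • (S f)⁻¹))
      = H * M * H - (c * c) • H := by
    simp only [hterm, smul_sub, smul_add, Finset.sum_sub_distrib, Finset.sum_add_distrib]
    have e1 : ∑ f, (s2 f)⁻¹ • (H * S f * H) = H * M * H := by
      rw [hM, Finset.mul_sum, Finset.sum_mul]
      exact Finset.sum_congr rfl fun f _ => by rw [Matrix.mul_smul, Matrix.smul_mul]
    have e2 : ∑ f, (s2 f)⁻¹ • (c • H) = (c * c) • H := by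
      rw [← Finset.sum_smul, ← hc, smul_smul]
    have e3 : ∑ f, (s2 f)⁻¹ • ((c * c) • (S f)⁻¹) = (c * c) • H := by
      rw [hH, Finset.smul_sum]
      exact Finset.sum_congr rfl fun f _ => smul_comm _ _ _
    rw [e1, e2, e3]
    abel
  -- B is PSD
  have hBpsd : (H * M * H - (c * c) • H).PosSemidef := by
    rw [← hB]
    refine psd_sum _ _ fun f _ => psd_smul' ?_ (inv_pos.mpr (hs2 f)).le
    have hP : (H - c • (S f)⁻¹)ᴴ = H - c • (S f)⁻¹ := by
      rw [conjTranspose_sub, hHpd.1, conjTranspose_smul, (hS f).inv.1, star_trivial]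
    have := (hS f).posSemidef.conjTranspose_mul_mul_same (H - c • (S f)⁻¹)
    rwa [hP] at this
  -- congruence by H⁻¹
  have key : M - (c ^ 2) • H⁻¹ = (H⁻¹)ᴴ * (H * M * H - (c * c) • H) * H⁻¹ := by
    rw [hHpd.inv.1, mul_sub, sub_mul]
    rw [Matrix.mul_smul, Matrix.smul_mul, ← Matrix.mul_assoc, ← Matrix.mul_assoc,
      nonsing_inv_mul _ hHdet, Matrix.one_mul, Matrix.one_mul,
      Matrix.mul_assoc, mul_nonsing_inv _ hHdet, Matrix.mul_one, pow_two]
  rw [key]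
  exact hBpsd.conjTranspose_mul_mul_same H⁻¹
end
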